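/- The adjunction on q-polynomials modulo (X^{q^m}-X) is anti-multiplicative: for all q-polynomials P, Q, one has (P ∘ Q)^* = Q^* ∘ P^* modulo (X^{q^m}-X). -/

import Mathlib

/-- Evaluation of the q-polynomial with coefficient vector `p` (q-degree `< m`). -/
def qEval (q : ℕ) {m : ℕ} {L : Type*} [Field L] (p : Fin m → L) (x : L) : L :=
  ∑ i : Fin m, p i * x ^ q ^ (i : ℕ)

/-- Evaluation of the adjoint `P^* = ∑ p_i^{q^{m-i}} X^{q^{m-i}}` (indices mod `m`). -/
def qAdjEval (q : ℕ) {m : ℕ} {L : Type*} [Field L] (p : Fin m → L) (x : L) : L :=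
  ∑ i : Fin m, (p i) ^ q ^ ((m - (i : ℕ)) % m) * x ^ q ^ ((m - (i : ℕ)) % m)

/-- Adjunction on q-polynomials modulo `X^{q^m} - X` is anti-multiplicative:
`(P ∘ Q)^* = Q^* ∘ P^*` modulo `X^{q^m} - X` (i.e. as induced maps on `F_{q^m}`). -/
theorem stmt_5 (q m : ℕ) (hm : 0 < m)
    (K L : Type*) [Field K] [Field L] [Algebra K L] [Fintype K] [FiniteDimensional K L]
    (hq : Fintype.card K = q) (hm' : Module.finrank K L = m)
    (p p' r : Fin m → L)
    (hr : ∀ x : L, qEval q r x = qEval q p (qEval q p' x)) :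
    ∀ x : L, qAdjEval q r x = qAdjEval q p' (qAdjEval q p x) := by
  classical
  haveI : Finite L := Module.finite_of_finite K
  haveI : Fintype L := Fintype.ofFinite L
  have hcard : Fintype.card L = q ^ m := by
    rw [← hq, ← hm']; exact Module.card_eq_pow_finrank
  have hLpow : ∀ x : L, x ^ q ^ m = x := by
    intro x; rw [← hcard]; exact FiniteField.pow_card x
  -- characteristic setup
  set pc := ringChar K with hpc
  haveI : CharP K pc := ringChar.charP K
  haveI : CharP L pc := charP_of_injective_algebraMap (algebraMap K L).injective pc
  obtain ⟨n, hp, hcardK⟩ := FiniteField.card K pc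
  haveI : Fact pc.Prime := ⟨hp⟩
  have hqpn : q = pc ^ (n : ℕ) := by rw [← hq, hcardK]
  -- the Frobenius x ↦ x^q as a K-algebra equivalence of L
  let f : L →ₐ[K] L :=
    { iterateFrobenius L pc n with
      commutes' := fun a => by
        show (algebraMap K L a) ^ pc ^ (n : ℕ) = algebraMap K L a
        rw [← map_pow, ← hcardK, FiniteField.pow_card] }
  have hfinj : Function.Injective f := f.toRingHom.injective
  let e : L ≃ₐ[K] L := AlgEquiv.ofBijective f
    ((Finite.injective_iff_bijective).mp hfinj)
  have key : ∀ z : L, Algebra.trace K L (z ^ q) = Algebra.trace K L z := by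
    intro z
    have : e z = z ^ q := by
      show z ^ pc ^ (n : ℕ) = z ^ q
      rw [hqpn]
    rw [← this, Algebra.trace_eq_of_algEquiv]
  have keyIter : ∀ (k : ℕ) (z : L),
      Algebra.trace K L (z ^ q ^ k) = Algebra.trace K L z := by
    intro k
    induction k with
    | zero => intro z; simp
    | succ k ih =>
      intro z
      rw [pow_succ, pow_mul, key (z ^ q ^ k), ih z]
  -- the adjoint property
  have adj : ∀ (c : Fin m → L) (x y : L),
      Algebra.trace K L (qAdjEval q c x * y) = Algebra.trace K L (x * qEval q c y) := by
    intro c x y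
    unfold qAdjEval qEval
    rw [Finset.sum_mul, Finset.mul_sum, map_sum, map_sum]
    refine Finset.sum_congr rfl fun i _ => ?_
    set j := (m - (i : ℕ)) % m with hj
    have hij : (y ^ q ^ (i : ℕ)) ^ q ^ j = y := by
      rcases Nat.eq_zero_or_pos (i : ℕ) with h0 | h0
      · simp [hj, h0, Nat.mod_self]
      · have hjj : j = m - (i : ℕ) := Nat.mod_eq_of_lt (by omega)
        have him : (i : ℕ) ≤ m := le_of_lt i.isLt
        rw [hjj, ← pow_mul, ← pow_add, Nat.add_sub_cancel' him, hLpow]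
    calc Algebra.trace K L (c i ^ q ^ j * x ^ q ^ j * y)
        = Algebra.trace K L ((x * (c i * y ^ q ^ (i : ℕ))) ^ q ^ j) := by
          rw [mul_pow, mul_pow, hij]; ring_nf
      _ = Algebra.trace K L (x * (c i * y ^ q ^ (i : ℕ))) := keyIter j _
  -- nondegeneracy of the trace form
  haveI : Algebra.IsSeparable K L := inferInstance
  intro x
  have hall : ∀ y : L,
      Algebra.trace K L ((qAdjEval q r x - qAdjEval q p' (qAdjEval q p x)) * y) = 0 := by
    intro y
    have h1 : Algebra.trace K L (qAdjEval q r x * y)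
        = Algebra.trace K L (qAdjEval q p' (qAdjEval q p x) * y) := by
      rw [adj r x y, hr y, ← adj p x (qEval q p' y), ← adj p' (qAdjEval q p x) y]
    rw [sub_mul, map_sub, h1, sub_self]
  have h0 := (traceForm_nondegenerate K L).1
    (qAdjEval q r x - qAdjEval q p' (qAdjEval q p x))
    (fun y => by rw [Algebra.traceForm_apply]; exact hall y)
  exact sub_eq_zero.mp h0
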